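/- Lacunary counterexample: Let k ≥ 1 and define on (0,1) the function g(x) := Σ_{Q ⊂ (0,1) dyadic, |Q| ≥ 2^{−k}} (1_{Q^l}(x) − 1_{Q^r}(x)), where Q^l, Q^r are the left and right dyadic halves of Q. Then ‖g‖_{L²(0,1)} = √k, while the dyadic average extension u(t,x) := ⟨g⟩_Q for (t,x) in the Whitney region W_Q satisfies C(∇u)(x) ≳ k for all x ∈ (0,1), where C is the Carleson functional applied to the jump measure ∇u. Consequently ‖C(∇u)‖_{L²} / ‖g‖_{L²} ≳ √k is unbounded in k. -/

import Mathlib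

open MeasureTheory Set ENNReal

noncomputable section

/-- The dyadic subinterval of `[0,1)` of depth `i` at position `j`. -/
def dyI (i j : ℕ) : Set ℝ := Set.Ico ((j : ℝ) / 2 ^ i) (((j : ℝ) + 1) / 2 ^ i)

/-- The lacunary function `g = Σ_{Q ⊂ (0,1) dyadic, |Q| ≥ 2^{−k}} (1_{Q^l} − 1_{Q^r})`. -/
def lacg (k : ℕ) (x : ℝ) : ℝ :=
  ∑ i ∈ Finset.Icc 1 k, ∑ j ∈ Finset.range (2 ^ i),
    ((dyI (i+1) (2*j)).indicator (fun _ => (1 : ℝ)) x -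
      (dyI (i+1) (2*j+1)).indicator (fun _ => (1 : ℝ)) x)

/-- The dyadic average `⟨g⟩_{I(i,j)}`. -/
def avgI (k i j : ℕ) : ℝ := ⨍ y in dyI i j, lacg k y

/-- The mass `|⟨g⟩_{Q'} − ⟨g⟩_{Q'_parent}| |Q'|` of the jump of the dyadic average extension
of `lacg k` across the interface above the dyadic interval `Q' = I(i,j)`. -/
def jumpMass (k i j : ℕ) : ℝ≥0∞ :=
  ENNReal.ofReal (|avgI k i j - avgI k (i-1) (j/2)| * 2 ^ (-(i : ℤ)))

/-- The (dyadic) Carleson functional of the jump measure `∇u` of the dyadic average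
extension `u` of `lacg k`: `sup_{Q ∋ x} |Q|⁻¹ |∇u|(Q̂)`. -/
def carlesonLac (k : ℕ) (x : ℝ) : ℝ≥0∞ :=
  ⨆ (i : ℕ) (j : ℕ) (_ : x ∈ dyI i j),
    (2 : ℝ≥0∞) ^ i *
      ∑' p : {p : ℕ × ℕ // i < p.1 ∧ dyI p.1 p.2 ⊆ dyI i j}, jumpMass k p.val.1 p.val.2



/-- One dyadic "layer" of Haar functions. -/
def lay (i : ℕ) (x : ℝ) : ℝ :=
  ∑ j ∈ Finset.range (2 ^ i),
    ((dyI (i+1) (2*j)).indicator (fun _ => (1 : ℝ)) x -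
      (dyI (i+1) (2*j+1)).indicator (fun _ => (1 : ℝ)) x)

lemma lacg_eq (k : ℕ) (x : ℝ) : lacg k x = ∑ i ∈ Finset.Icc 1 k, lay i x := rfl

lemma measurableSet_dyI (i j : ℕ) : MeasurableSet (dyI i j) := measurableSet_Ico

lemma volume_dyI (i j : ℕ) : volume (dyI i j) = ENNReal.ofReal ((2:ℝ)^i)⁻¹ := by
  rw [dyI, Real.volume_Ico]
  congr 1
  field_simp
  ring

lemma dyI_zero : dyI 0 0 = Set.Ico (0:ℝ) 1 := by
  simp [dyI]


lemma dyI_subset {a a' : ℕ} (h : a ≤ a') (n : ℕ) : dyI a' n ⊆ dyI a (n / 2^(a'-a)) := by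
  intro x hx
  obtain ⟨h1, h2⟩ := hx
  set d := a' - a with hd
  have ha' : a' = a + d := by omega
  set q := n / 2^d with hq
  have hq1 : q * 2^d ≤ n := Nat.div_mul_le_self n _
  have hq2 : n + 1 ≤ (q+1) * 2^d := by
    have h' : n < (q+1) * 2^d := by
      rw [← Nat.div_lt_iff_lt_mul (by positivity)]
      omega
    omega
  have hpa : (0:ℝ) < 2^a := by positivity
  have hpd : (0:ℝ) < 2^d := by positivity
  constructor
  · calc (q:ℝ)/2^a = (q*2^d)/(2^a*2^d) := by
          rw [mul_div_mul_right _ _ (ne_of_gt hpd)]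
      _ ≤ (n:ℝ)/(2^a*2^d) := by gcongr; exact_mod_cast hq1
      _ = (n:ℝ)/2^a' := by rw [ha', pow_add]
      _ ≤ x := h1
  · calc x < ((n:ℝ)+1)/2^a' := h2
      _ = ((n:ℝ)+1)/(2^a*2^d) := by rw [ha', pow_add]
      _ ≤ (((q:ℝ)+1)*2^d)/(2^a*2^d) := by
          gcongr
          exact_mod_cast hq2
      _ = ((q:ℝ)+1)/2^a := by rw [mul_div_mul_right _ _ (ne_of_gt hpd)]

lemma dyI_disj (a : ℕ) {n n' : ℕ} (h : n ≠ n') : dyI a n ∩ dyI a n' = ∅ := by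
  have key : ∀ m m' : ℕ, m < m' → dyI a m ∩ dyI a m' = ∅ := by
    intro m m' hmm
    ext x
    simp only [Set.mem_inter_iff, Set.mem_empty_iff_false, iff_false, not_and]
    rintro ⟨h1, h2⟩ ⟨h3, h4⟩
    have hpa : (0:ℝ) < 2^a := by positivity
    have : ((m:ℝ)+1) ≤ (m':ℝ) := by exact_mod_cast hmm
    have : ((m:ℝ)+1)/2^a ≤ (m':ℝ)/2^a := by gcongr
    linarith
  rcases h.lt_or_gt with h' | h'
  · exact key _ _ h'
  · rw [Set.inter_comm]; exact key _ _ h'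

lemma vol_inter {a a' : ℕ} (h : a ≤ a') (b m : ℕ) :
    volume (dyI a b ∩ dyI a' m) =
      if m / 2^(a'-a) = b then ENNReal.ofReal ((2:ℝ)^a')⁻¹ else 0 := by
  have hsub := dyI_subset h m
  split_ifs with he
  · rw [he] at hsub
    rw [Set.inter_eq_self_of_subset_right hsub]
    rw [dyI, Real.volume_Ico]
    congr 1
    field_simp
    ring
  · have : dyI a b ∩ dyI a' m ⊆ dyI a b ∩ dyI a (m / 2^(a'-a)) :=
      Set.inter_subset_inter_right _ hsub
    rw [dyI_disj a (fun hc => he hc.symm)] at this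
    rw [Set.eq_empty_of_subset_empty this]
    exact measure_empty


lemma integrable_ind (i j : ℕ) :
    Integrable ((dyI i j).indicator (fun _ => (1:ℝ))) := by
  rw [integrable_indicator_iff (measurableSet_dyI i j)]
  refine integrableOn_const ?_
  rw [volume_dyI]; exact ofReal_ne_top

lemma integrable_lay (i : ℕ) : Integrable (lay i) := by
  apply integrable_finset_sum
  intro j _
  exact (integrable_ind _ _).sub (integrable_ind _ _)

lemma measurable_lay (i : ℕ) : Measurable (lay i) := by
  apply Finset.measurable_sum
  intro j _
  exact ((measurable_const.indicator (measurableSet_dyI _ _)).sub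
    (measurable_const.indicator (measurableSet_dyI _ _)))

lemma abs_ind_le (s : Set ℝ) (x : ℝ) : |s.indicator (fun _ => (1:ℝ)) x| ≤ 1 := by
  by_cases h : x ∈ s <;> simp [Set.indicator_apply, h]

lemma abs_lay_le (i : ℕ) (x : ℝ) : |lay i x| ≤ 2 * 2^i := by
  calc |lay i x| ≤ ∑ j ∈ Finset.range (2^i),
        |(dyI (i+1) (2*j)).indicator (fun _ => (1 : ℝ)) x -
          (dyI (i+1) (2*j+1)).indicator (fun _ => (1 : ℝ)) x| :=
        Finset.abs_sum_le_sum_abs _ _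
    _ ≤ ∑ _j ∈ Finset.range (2^i), 2 := by
        apply Finset.sum_le_sum
        intro j _
        calc |_ - _| ≤ |(dyI (i+1) (2*j)).indicator (fun _ => (1 : ℝ)) x| +
              |(dyI (i+1) (2*j+1)).indicator (fun _ => (1 : ℝ)) x| := abs_sub _ _
          _ ≤ 2 := by have := abs_ind_le (dyI (i+1) (2*j)) x
                      have := abs_ind_le (dyI (i+1) (2*j+1)) x
                      linarith
    _ = 2 * 2^i := by simp [Finset.sum_const, Finset.card_range]; ring

lemma ind_one_mul (A : Set ℝ) (f : ℝ → ℝ) (x : ℝ) :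
    A.indicator (fun _ => (1:ℝ)) x * f x = A.indicator f x := by
  by_cases h : x ∈ A <;> simp [Set.indicator_apply, h]

lemma ind_mul (A B : Set ℝ) (x : ℝ) :
    A.indicator (fun _ => (1:ℝ)) x * B.indicator (fun _ => (1:ℝ)) x =
      (A ∩ B).indicator (fun _ => (1:ℝ)) x := by
  by_cases hA : x ∈ A <;> by_cases hB : x ∈ B <;>
    simp [Set.indicator_apply, hA, hB, Set.mem_inter_iff]

lemma int_ind (s : Set ℝ) (i j : ℕ) :
    ∫ x in s, (dyI i j).indicator (fun _ => (1:ℝ)) x = (volume (s ∩ dyI i j)).toReal := by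
  rw [setIntegral_indicator (measurableSet_dyI i j), setIntegral_const, smul_eq_mul, mul_one, measureReal_def]


lemma int_lay_expand (i' a b : ℕ) :
    ∫ x in dyI a b, lay i' x =
      ∑ j ∈ Finset.range (2^i'),
        ((volume (dyI a b ∩ dyI (i'+1) (2*j))).toReal -
          (volume (dyI a b ∩ dyI (i'+1) (2*j+1))).toReal) := by
  rw [show (fun x => lay i' x) = fun x => ∑ j ∈ Finset.range (2^i'),
      ((dyI (i'+1) (2*j)).indicator (fun _ => (1 : ℝ)) x -
        (dyI (i'+1) (2*j+1)).indicator (fun _ => (1 : ℝ)) x) from rfl]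
  rw [integral_finset_sum]
  · apply Finset.sum_congr rfl
    intro j _
    rw [integral_sub ((integrable_ind _ _).integrableOn) ((integrable_ind _ _).integrableOn),
      int_ind, int_ind]
  · intro j _
    exact ((integrable_ind _ _).sub (integrable_ind _ _)).integrableOn

lemma L1 {i' a : ℕ} (h : a ≤ i') (b : ℕ) : ∫ x in dyI a b, lay i' x = 0 := by
  rw [int_lay_expand]
  apply Finset.sum_eq_zero
  intro j _
  have h' : a ≤ i' + 1 := by omega
  rw [vol_inter h', vol_inter h']
  have he : (2*j) / 2^(i'+1-a) = (2*j+1) / 2^(i'+1-a) := by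
    obtain ⟨e, he⟩ : ∃ e, i'+1-a = e+1 := ⟨i'-a, by omega⟩
    rw [he, pow_succ']
    rw [← Nat.div_div_eq_div_mul, ← Nat.div_div_eq_div_mul]
    congr 1
    omega
  rw [he, sub_self]

lemma L2 {i' a : ℕ} (h : i' + 1 ≤ a) {b : ℕ} (hb : b < 2^a) :
    ∫ x in dyI a b, lay i' x =
      (1 - 2*(((b / 2^(a-1-i')) % 2 : ℕ):ℝ)) * ((2:ℝ)^a)⁻¹ := by
  rw [int_lay_expand]
  set n₀ := b / 2^(a-1-i') with hn₀
  have hsub : a - (i'+1) = a - 1 - i' := by omega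
  have hvol : ∀ m : ℕ, volume (dyI a b ∩ dyI (i'+1) m) =
      if n₀ = m then ENNReal.ofReal ((2:ℝ)^a)⁻¹ else 0 := by
    intro m
    rw [Set.inter_comm, vol_inter h, hsub, ← hn₀]
  have hC : (0:ℝ) ≤ ((2:ℝ)^a)⁻¹ := by positivity
  have htr : ∀ m : ℕ, (volume (dyI a b ∩ dyI (i'+1) m)).toReal =
      if n₀ = m then ((2:ℝ)^a)⁻¹ else 0 := by
    intro m
    rw [hvol m, apply_ite ENNReal.toReal, ENNReal.toReal_ofReal hC, ENNReal.toReal_zero]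
  have hn0lt : n₀ < 2^(i'+1) := by
    rw [hn₀, Nat.div_lt_iff_lt_mul (by positivity), ← pow_add]
    have : i' + 1 + (a-1-i') = a := by omega
    rw [this]; exact hb
  have hmem : n₀ / 2 ∈ Finset.range (2^i') := by
    rw [Finset.mem_range]
    have h2 : (2:ℕ)^(i'+1) = 2 * 2^i' := by rw [pow_succ]; ring
    omega
  rw [Finset.sum_eq_single (n₀ / 2)]
  · rw [htr, htr]
    rcases Nat.mod_two_eq_zero_or_one n₀ with hr | hr
    · rw [if_pos (by omega), if_neg (by omega), hn₀] at *
      rw [hr]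
      norm_num
    · rw [if_neg (by omega), if_pos (by omega)]
      rw [hr]
      norm_num
  · intro j _ hj
    rw [htr, htr, if_neg (by omega), if_neg (by omega), sub_self]
  · intro hc
    exact absurd hmem hc


lemma MAIN (k : ℕ) {a b : ℕ} (hb : b < 2^a) :
    ∫ x in dyI a b, lacg k x =
      (∑ i' ∈ Finset.Icc 1 (min (a-1) k), (1 - 2*(((b / 2^(a-1-i')) % 2 : ℕ):ℝ)))
        * ((2:ℝ)^a)⁻¹ := by
  have : (fun x => lacg k x) = fun x => ∑ i' ∈ Finset.Icc 1 k, lay i' x := by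
    funext x; exact lacg_eq k x
  rw [this, integral_finset_sum _ (fun i _ => (integrable_lay i).integrableOn)]
  have hstep : ∀ i' ∈ Finset.Icc 1 k, ∫ x in dyI a b, lay i' x =
      if i' + 1 ≤ a then (1 - 2*(((b / 2^(a-1-i')) % 2 : ℕ):ℝ)) * ((2:ℝ)^a)⁻¹ else 0 := by
    intro i' _
    split_ifs with hc
    · exact L2 hc hb
    · exact L1 (by omega) b
  rw [Finset.sum_congr rfl hstep, Finset.sum_ite, Finset.sum_const_zero, add_zero,
    ← Finset.sum_mul]
  congr 2
  ext i'
  simp only [Finset.mem_filter, Finset.mem_Icc]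
  omega

lemma avg_eq (k : ℕ) {a b : ℕ} (hb : b < 2^a) :
    avgI k a b = ∑ i' ∈ Finset.Icc 1 (min (a-1) k), (1 - 2*(((b / 2^(a-1-i')) % 2 : ℕ):ℝ)) := by
  rw [avgI, setAverage_eq, measureReal_def, volume_dyI, ENNReal.toReal_ofReal (by positivity), inv_inv,
    smul_eq_mul, MAIN k hb]
  field_simp

lemma jump_eq (k : ℕ) {i j : ℕ} (h2 : 2 ≤ i) (hik : i ≤ k+1) (hj : j < 2^i) :
    jumpMass k i j = ENNReal.ofReal ((2:ℝ) ^ (-(i : ℤ))) := by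
  obtain ⟨i0, rfl⟩ : ∃ i0, i = i0 + 2 := ⟨i-2, by omega⟩
  have hj2 : j / 2 < 2^(i0+1) := by
    have : (2:ℕ)^(i0+2) = 2 * 2^(i0+1) := by rw [pow_succ]; ring
    omega
  have hmin1 : min (i0+2-1) k = i0 + 1 := by omega
  have hmin2 : min (i0+1-1) k = i0 := by omega
  have h1 := avg_eq k hj
  have h2' := avg_eq k hj2
  rw [hmin1] at h1
  rw [hmin2] at h2'
  have hcongr : ∀ i' ∈ Finset.Icc 1 i0,
      (1 - 2*(((j / 2 / 2^(i0+1-1-i')) % 2 : ℕ):ℝ)) =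
      (1 - 2*(((j / 2^(i0+2-1-i')) % 2 : ℕ):ℝ)) := by
    intro i' hi'
    rw [Finset.mem_Icc] at hi'
    have hex : i0 + 2 - 1 - i' = (i0+1-1-i') + 1 := by omega
    rw [hex, pow_succ', ← Nat.div_div_eq_div_mul]
  rw [Finset.sum_congr rfl hcongr] at h2'
  have hdiff : avgI k (i0+2) j - avgI k (i0+1) (j/2) = 1 - 2*((j % 2 : ℕ):ℝ) := by
    rw [h1, h2', Finset.sum_Icc_succ_top (by omega : 1 ≤ i0 + 1)]
    have : i0 + 2 - 1 - (i0+1) = 0 := by omega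
    rw [this]
    simp
  rw [jumpMass]
  have : (i0 + 2 - 1 : ℕ) = i0 + 1 := by omega
  rw [this, hdiff]
  have habs : |1 - 2*((j % 2 : ℕ):ℝ)| = 1 := by
    rcases Nat.mod_two_eq_zero_or_one j with hr | hr <;> rw [hr] <;> norm_num
  rw [habs, one_mul]


lemma integrable_lacg (k : ℕ) : Integrable (lacg k) := by
  have : lacg k = fun x => ∑ i ∈ Finset.Icc 1 k, lay i x := by
    funext x; exact lacg_eq k x
  rw [this]
  exact integrable_finset_sum _ (fun i _ => integrable_lay i)

lemma measurable_lacg (k : ℕ) : Measurable (lacg k) := by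
  have : lacg k = fun x => ∑ i ∈ Finset.Icc 1 k, lay i x := by
    funext x; exact lacg_eq k x
  rw [this]
  exact Finset.measurable_sum _ (fun i _ => measurable_lay i)

lemma abs_lacg_le (k : ℕ) (x : ℝ) : |lacg k x| ≤ ∑ i ∈ Finset.Icc 1 k, 2 * 2^i := by
  rw [lacg_eq]
  exact le_trans (Finset.abs_sum_le_sum_abs _ _)
    (Finset.sum_le_sum fun i _ => abs_lay_le i x)

-- the subset of [0,1)
lemma dyI_subset_Ico01 {d n : ℕ} (hn : n < 2^d) : dyI d n ⊆ Set.Ico (0:ℝ) 1 := by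
  have h := dyI_subset (Nat.zero_le d) n
  rw [Nat.sub_zero, Nat.div_eq_of_lt hn, dyI_zero] at h
  exact h

-- helper H
lemma H (d n n' : ℕ) (hn : n < 2^d) :
    ∫ x in Set.Ico (0:ℝ) 1,
      ((dyI d n).indicator (fun _ => (1:ℝ)) x * (dyI d n').indicator (fun _ => (1:ℝ)) x) =
      if n = n' then ((2:ℝ)^d)⁻¹ else 0 := by
  have : (fun x => (dyI d n).indicator (fun _ => (1:ℝ)) x *
      (dyI d n').indicator (fun _ => (1:ℝ)) x) =
      fun x => ((dyI d n ∩ dyI d n').indicator (fun _ => (1:ℝ)) x) := by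
    funext x; exact ind_mul _ _ x
  rw [this]
  split_ifs with he
  · subst he
    rw [Set.inter_self, setIntegral_indicator (measurableSet_dyI d n), setIntegral_const,
      Set.inter_comm, Set.inter_eq_self_of_subset_left (dyI_subset_Ico01 hn),
      measureReal_def, volume_dyI, ENNReal.toReal_ofReal (by positivity), smul_eq_mul, mul_one]
  · rw [dyI_disj d he]
    simp

lemma int_sq_lay (m : ℕ) : ∫ x in Set.Ico (0:ℝ) 1, (lay m x)^2 = 1 := by
  have hpt : ∀ x, (lay m x)^2 = ∑ j ∈ Finset.range (2^m), ∑ j' ∈ Finset.range (2^m),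
      (((dyI (m+1) (2*j)).indicator (fun _ => (1 : ℝ)) x -
        (dyI (m+1) (2*j+1)).indicator (fun _ => (1 : ℝ)) x) *
       ((dyI (m+1) (2*j')).indicator (fun _ => (1 : ℝ)) x -
        (dyI (m+1) (2*j'+1)).indicator (fun _ => (1 : ℝ)) x)) := by
    intro x
    rw [sq, lay, Finset.sum_mul_sum]
  simp only [hpt]
  have hint : ∀ (A B C D : ℕ × ℕ), Integrable (fun x =>
      ((dyI A.1 A.2).indicator (fun _ => (1 : ℝ)) x - (dyI B.1 B.2).indicator (fun _ => (1 : ℝ)) x) *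
      ((dyI C.1 C.2).indicator (fun _ => (1 : ℝ)) x - (dyI D.1 D.2).indicator (fun _ => (1 : ℝ)) x)) := by
    intro A B C D
    apply Integrable.bdd_mul ((integrable_ind _ _).sub (integrable_ind _ _))
    · exact ((measurable_const.indicator (measurableSet_dyI _ _)).sub
        (measurable_const.indicator (measurableSet_dyI _ _))).aestronglyMeasurable
    · refine Filter.Eventually.of_forall (fun x => ?_)
      rw [Real.norm_eq_abs]
      have h1 := abs_ind_le (dyI A.1 A.2) x
      have h2 := abs_ind_le (dyI B.1 B.2) x
      calc |_ - _| ≤ |(dyI A.1 A.2).indicator (fun _ => (1:ℝ)) x| +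
            |(dyI B.1 B.2).indicator (fun _ => (1:ℝ)) x| := abs_sub _ _
        _ ≤ 2 := by linarith
  rw [integral_finset_sum _ (fun j _ => (integrable_finset_sum _
    (fun j' _ => hint (m+1, 2*j) (m+1, 2*j+1) (m+1, 2*j') (m+1, 2*j'+1))).integrableOn)]
  have hinner : ∀ j ∈ Finset.range (2^m),
      (∫ x in Set.Ico (0:ℝ) 1, ∑ j' ∈ Finset.range (2^m),
      (((dyI (m+1) (2*j)).indicator (fun _ => (1 : ℝ)) x -
        (dyI (m+1) (2*j+1)).indicator (fun _ => (1 : ℝ)) x) *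
       ((dyI (m+1) (2*j')).indicator (fun _ => (1 : ℝ)) x -
        (dyI (m+1) (2*j'+1)).indicator (fun _ => (1 : ℝ)) x))) = 2 * ((2:ℝ)^(m+1))⁻¹ := by
    intro j hj
    rw [Finset.mem_range] at hj
    have hjlt : 2*j < 2^(m+1) := by
      have : (2:ℕ)^(m+1) = 2*2^m := by rw [pow_succ]; ring
      omega
    have hjlt1 : 2*j+1 < 2^(m+1) := by
      have : (2:ℕ)^(m+1) = 2*2^m := by rw [pow_succ]; ring
      omega
    rw [integral_finset_sum _
      (fun j' _ => (hint (m+1, 2*j) (m+1, 2*j+1) (m+1, 2*j') (m+1, 2*j'+1)).integrableOn)]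
    have hterm : ∀ j' ∈ Finset.range (2^m),
        (∫ x in Set.Ico (0:ℝ) 1,
        (((dyI (m+1) (2*j)).indicator (fun _ => (1 : ℝ)) x -
          (dyI (m+1) (2*j+1)).indicator (fun _ => (1 : ℝ)) x) *
         ((dyI (m+1) (2*j')).indicator (fun _ => (1 : ℝ)) x -
          (dyI (m+1) (2*j'+1)).indicator (fun _ => (1 : ℝ)) x))) =
        if j = j' then 2 * ((2:ℝ)^(m+1))⁻¹ else 0 := by
      intro j' _
      have hexp : ∀ x, (((dyI (m+1) (2*j)).indicator (fun _ => (1 : ℝ)) x -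
          (dyI (m+1) (2*j+1)).indicator (fun _ => (1 : ℝ)) x) *
         ((dyI (m+1) (2*j')).indicator (fun _ => (1 : ℝ)) x -
          (dyI (m+1) (2*j'+1)).indicator (fun _ => (1 : ℝ)) x)) =
          (dyI (m+1) (2*j)).indicator (fun _ => (1 : ℝ)) x * (dyI (m+1) (2*j')).indicator (fun _ => (1 : ℝ)) x
          - (dyI (m+1) (2*j)).indicator (fun _ => (1 : ℝ)) x * (dyI (m+1) (2*j'+1)).indicator (fun _ => (1 : ℝ)) x
          - (dyI (m+1) (2*j+1)).indicator (fun _ => (1 : ℝ)) x * (dyI (m+1) (2*j')).indicator (fun _ => (1 : ℝ)) x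
          + (dyI (m+1) (2*j+1)).indicator (fun _ => (1 : ℝ)) x * (dyI (m+1) (2*j'+1)).indicator (fun _ => (1 : ℝ)) x := by
        intro x; ring
      simp only [hexp]
      have hImul : ∀ n n' : ℕ, Integrable (fun x =>
          (dyI (m+1) n).indicator (fun _ => (1 : ℝ)) x * (dyI (m+1) n').indicator (fun _ => (1 : ℝ)) x) := by
        intro n n'
        apply Integrable.bdd_mul (integrable_ind _ _)
          (measurable_const.indicator (measurableSet_dyI _ _)).aestronglyMeasurable
        exact Filter.Eventually.of_forall (fun x => by rw [Real.norm_eq_abs]; exact abs_ind_le _ x)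
      have e1 : (∫ x in Set.Ico (0:ℝ) 1,
          ((dyI (m+1) (2*j)).indicator (fun _ => (1 : ℝ)) x * (dyI (m+1) (2*j')).indicator (fun _ => (1 : ℝ)) x
          - (dyI (m+1) (2*j)).indicator (fun _ => (1 : ℝ)) x * (dyI (m+1) (2*j'+1)).indicator (fun _ => (1 : ℝ)) x
          - (dyI (m+1) (2*j+1)).indicator (fun _ => (1 : ℝ)) x * (dyI (m+1) (2*j')).indicator (fun _ => (1 : ℝ)) x
          + (dyI (m+1) (2*j+1)).indicator (fun _ => (1 : ℝ)) x * (dyI (m+1) (2*j'+1)).indicator (fun _ => (1 : ℝ)) x)) =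
          (∫ x in Set.Ico (0:ℝ) 1,
          ((dyI (m+1) (2*j)).indicator (fun _ => (1 : ℝ)) x * (dyI (m+1) (2*j')).indicator (fun _ => (1 : ℝ)) x
          - (dyI (m+1) (2*j)).indicator (fun _ => (1 : ℝ)) x * (dyI (m+1) (2*j'+1)).indicator (fun _ => (1 : ℝ)) x
          - (dyI (m+1) (2*j+1)).indicator (fun _ => (1 : ℝ)) x * (dyI (m+1) (2*j')).indicator (fun _ => (1 : ℝ)) x))
          + ∫ x in Set.Ico (0:ℝ) 1,
          (dyI (m+1) (2*j+1)).indicator (fun _ => (1 : ℝ)) x * (dyI (m+1) (2*j'+1)).indicator (fun _ => (1 : ℝ)) x :=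
        integral_add (((hImul _ _).sub (hImul _ _)).sub (hImul _ _)).integrableOn
          (hImul _ _).integrableOn
      have e2 : (∫ x in Set.Ico (0:ℝ) 1,
          ((dyI (m+1) (2*j)).indicator (fun _ => (1 : ℝ)) x * (dyI (m+1) (2*j')).indicator (fun _ => (1 : ℝ)) x
          - (dyI (m+1) (2*j)).indicator (fun _ => (1 : ℝ)) x * (dyI (m+1) (2*j'+1)).indicator (fun _ => (1 : ℝ)) x
          - (dyI (m+1) (2*j+1)).indicator (fun _ => (1 : ℝ)) x * (dyI (m+1) (2*j')).indicator (fun _ => (1 : ℝ)) x)) =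
          (∫ x in Set.Ico (0:ℝ) 1,
          ((dyI (m+1) (2*j)).indicator (fun _ => (1 : ℝ)) x * (dyI (m+1) (2*j')).indicator (fun _ => (1 : ℝ)) x
          - (dyI (m+1) (2*j)).indicator (fun _ => (1 : ℝ)) x * (dyI (m+1) (2*j'+1)).indicator (fun _ => (1 : ℝ)) x))
          - ∫ x in Set.Ico (0:ℝ) 1,
          (dyI (m+1) (2*j+1)).indicator (fun _ => (1 : ℝ)) x * (dyI (m+1) (2*j')).indicator (fun _ => (1 : ℝ)) x :=
        integral_sub ((hImul _ _).sub (hImul _ _)).integrableOn (hImul _ _).integrableOn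
      have e3 : (∫ x in Set.Ico (0:ℝ) 1,
          ((dyI (m+1) (2*j)).indicator (fun _ => (1 : ℝ)) x * (dyI (m+1) (2*j')).indicator (fun _ => (1 : ℝ)) x
          - (dyI (m+1) (2*j)).indicator (fun _ => (1 : ℝ)) x * (dyI (m+1) (2*j'+1)).indicator (fun _ => (1 : ℝ)) x)) =
          (∫ x in Set.Ico (0:ℝ) 1,
          (dyI (m+1) (2*j)).indicator (fun _ => (1 : ℝ)) x * (dyI (m+1) (2*j')).indicator (fun _ => (1 : ℝ)) x)
          - ∫ x in Set.Ico (0:ℝ) 1,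
          (dyI (m+1) (2*j)).indicator (fun _ => (1 : ℝ)) x * (dyI (m+1) (2*j'+1)).indicator (fun _ => (1 : ℝ)) x :=
        integral_sub (hImul _ _).integrableOn (hImul _ _).integrableOn
      rw [e1, e2, e3, H _ _ _ hjlt, H _ _ _ hjlt, H _ _ _ hjlt1, H _ _ _ hjlt1]
      by_cases hjj : j = j'
      · subst hjj
        rw [if_pos rfl, if_pos rfl, if_pos rfl,
          if_neg (show ¬2*j = 2*j+1 by omega), if_neg (show ¬2*j+1 = 2*j by omega)]
        ring
      · rw [if_neg hjj, if_neg (show ¬2*j = 2*j' by omega), if_neg (show ¬2*j = 2*j'+1 by omega),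
          if_neg (show ¬2*j+1 = 2*j' by omega), if_neg (show ¬2*j+1 = 2*j'+1 by omega)]
        ring
    rw [Finset.sum_congr rfl hterm, Finset.sum_ite_eq (Finset.range (2^m)) j
      (fun _ => 2 * ((2:ℝ)^(m+1))⁻¹), if_pos (Finset.mem_range.2 hj)]
  rw [Finset.sum_congr rfl hinner, Finset.sum_const, Finset.card_range, nsmul_eq_mul]
  have h2 : (2:ℝ)^(m+1) = 2^m * 2 := by rw [pow_succ]
  rw [h2]
  push_cast
  field_simp


lemma integrable_ind_mul_lacg (d n k : ℕ) :
    Integrable (fun x => (dyI d n).indicator (fun _ => (1:ℝ)) x * lacg k x) := by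
  apply Integrable.bdd_mul (integrable_lacg k)
    (measurable_const.indicator (measurableSet_dyI _ _)).aestronglyMeasurable
  exact Filter.Eventually.of_forall (fun x => by rw [Real.norm_eq_abs]; exact abs_ind_le _ x)

lemma int_ind_lacg {k d n : ℕ} (hn : n < 2^d) :
    ∫ x in Set.Ico (0:ℝ) 1, (dyI d n).indicator (fun _ => (1:ℝ)) x * lacg k x =
      ∫ x in dyI d n, lacg k x := by
  have : ∀ x, (dyI d n).indicator (fun _ => (1:ℝ)) x * lacg k x =
      (dyI d n).indicator (lacg k) x := fun x => ind_one_mul _ _ x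
  simp only [this]
  rw [setIntegral_indicator (measurableSet_dyI d n),
    Set.inter_eq_self_of_subset_right (dyI_subset_Ico01 hn)]

lemma cross {k m : ℕ} (hkm : k < m) :
    ∫ x in Set.Ico (0:ℝ) 1, lay m x * lacg k x = 0 := by
  have hpt : ∀ x, lay m x * lacg k x = ∑ j ∈ Finset.range (2^m),
      ((dyI (m+1) (2*j)).indicator (fun _ => (1:ℝ)) x * lacg k x -
        (dyI (m+1) (2*j+1)).indicator (fun _ => (1:ℝ)) x * lacg k x) := by
    intro x
    rw [lay, Finset.sum_mul]
    exact Finset.sum_congr rfl (fun j _ => by ring)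
  simp only [hpt]
  rw [integral_finset_sum]
  · apply Finset.sum_eq_zero
    intro j hj
    rw [Finset.mem_range] at hj
    have h2 : (2:ℕ)^(m+1) = 2*2^m := by rw [pow_succ]; ring
    have hjlt : 2*j < 2^(m+1) := by omega
    have hjlt1 : 2*j+1 < 2^(m+1) := by omega
    have e1 : ∫ x in Set.Ico (0:ℝ) 1,
        ((dyI (m+1) (2*j)).indicator (fun _ => (1:ℝ)) x * lacg k x -
          (dyI (m+1) (2*j+1)).indicator (fun _ => (1:ℝ)) x * lacg k x) =
        (∫ x in Set.Ico (0:ℝ) 1, (dyI (m+1) (2*j)).indicator (fun _ => (1:ℝ)) x * lacg k x) -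
          ∫ x in Set.Ico (0:ℝ) 1, (dyI (m+1) (2*j+1)).indicator (fun _ => (1:ℝ)) x * lacg k x :=
      integral_sub (integrable_ind_mul_lacg _ _ _).integrableOn
        (integrable_ind_mul_lacg _ _ _).integrableOn
    rw [e1, int_ind_lacg hjlt, int_ind_lacg hjlt1, MAIN k hjlt, MAIN k hjlt1]
    have hcongr : ∀ i' ∈ Finset.Icc 1 (min (m+1-1) k),
        (1 - 2*((((2*j) / 2^(m+1-1-i')) % 2 : ℕ):ℝ)) =
        (1 - 2*((((2*j+1) / 2^(m+1-1-i')) % 2 : ℕ):ℝ)) := by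
      intro i' hi'
      rw [Finset.mem_Icc] at hi'
      have hex : m + 1 - 1 - i' = (m - 1 - i') + 1 := by omega
      rw [hex, pow_succ', ← Nat.div_div_eq_div_mul, ← Nat.div_div_eq_div_mul]
      have : (2*j)/2 = (2*j+1)/2 := by omega
      rw [this]
    rw [Finset.sum_congr rfl hcongr, sub_self]
  · intro j _
    exact ((integrable_ind_mul_lacg _ _ _).sub (integrable_ind_mul_lacg _ _ _)).integrableOn

lemma int_sq_lacg (k : ℕ) : ∫ x in Set.Ico (0:ℝ) 1, (lacg k x)^2 = k := by
  induction k with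
  | zero =>
    have h0 : ∀ x, lacg 0 x = 0 := by
      intro x; rw [lacg_eq]; simp
    simp only [h0]
    simp
  | succ n ih =>
    have hs : ∀ x, (lacg (n+1) x)^2 =
        (lacg n x)^2 + (2*(lay (n+1) x * lacg n x) + (lay (n+1) x)^2) := by
      intro x
      have h1 : lacg (n+1) x = lacg n x + lay (n+1) x := by
        rw [lacg_eq, lacg_eq, Finset.sum_Icc_succ_top (by omega : 1 ≤ n+1)]
      rw [h1]; ring
    simp only [hs]
    have hsqeq : ∀ f : ℝ → ℝ, (fun x => (f x)^2) = fun x => f x * f x := by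
      intro f; funext x; ring
    have hA : Integrable (fun x => (lacg n x)^2) := by
      rw [hsqeq]
      exact (integrable_lacg n).bdd_mul (measurable_lacg n).aestronglyMeasurable
        (Filter.Eventually.of_forall fun x => by rw [Real.norm_eq_abs]; exact abs_lacg_le n x)
    have hB0 : Integrable (fun x => lay (n+1) x * lacg n x) :=
      (integrable_lacg n).bdd_mul (measurable_lay (n+1)).aestronglyMeasurable
        (Filter.Eventually.of_forall fun x => by rw [Real.norm_eq_abs]; exact abs_lay_le (n+1) x)
    have hB : Integrable (fun x => 2*(lay (n+1) x * lacg n x)) := hB0.const_mul 2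
    have hC : Integrable (fun x => (lay (n+1) x)^2) := by
      rw [hsqeq]
      exact (integrable_lay (n+1)).bdd_mul (measurable_lay (n+1)).aestronglyMeasurable
        (Filter.Eventually.of_forall fun x => by rw [Real.norm_eq_abs]; exact abs_lay_le (n+1) x)
    have e1 : ∫ x in Set.Ico (0:ℝ) 1,
        ((lacg n x)^2 + (2*(lay (n+1) x * lacg n x) + (lay (n+1) x)^2)) =
        (∫ x in Set.Ico (0:ℝ) 1, (lacg n x)^2) +
          ∫ x in Set.Ico (0:ℝ) 1, (2*(lay (n+1) x * lacg n x) + (lay (n+1) x)^2) :=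
      integral_add hA.integrableOn (hB.add hC).integrableOn
    have e2 : ∫ x in Set.Ico (0:ℝ) 1,
        (2*(lay (n+1) x * lacg n x) + (lay (n+1) x)^2) =
        (∫ x in Set.Ico (0:ℝ) 1, 2*(lay (n+1) x * lacg n x)) +
          ∫ x in Set.Ico (0:ℝ) 1, (lay (n+1) x)^2 :=
      integral_add hB.integrableOn hC.integrableOn
    have e3 : ∫ x in Set.Ico (0:ℝ) 1, 2*(lay (n+1) x * lacg n x) =
        2 * ∫ x in Set.Ico (0:ℝ) 1, lay (n+1) x * lacg n x :=
      integral_const_mul 2 _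
    rw [e1, e2, e3, cross (by omega : n < n+1), int_sq_lay (n+1), ih]
    push_cast
    ring

lemma carleson_lb (k : ℕ) {x : ℝ} (hx : x ∈ Set.Ico (0:ℝ) 1) :
    (k : ℝ≥0∞) ≤ carlesonLac k x := by
  have hx0 : x ∈ dyI 0 0 := by rw [dyI_zero]; exact hx
  -- the finite family of jump locations
  set P : ℕ × ℕ → Prop := fun p => 0 < p.1 ∧ dyI p.1 p.2 ⊆ dyI 0 0 with hP
  set s : Finset (ℕ × ℕ) :=
    (Finset.Icc 2 (k+1) ×ˢ Finset.range (2^(k+1+1))).filter (fun p => p.2 < 2^p.1) with hs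
  have hmem : ∀ p ∈ s, P p := by
    intro p hp
    rw [hs, Finset.mem_filter, Finset.mem_product, Finset.mem_Icc] at hp
    refine ⟨by omega, ?_⟩
    have h := dyI_subset (Nat.zero_le p.1) p.2
    rw [Nat.sub_zero, Nat.div_eq_of_lt hp.2] at h
    exact h
  have key : ∑ p ∈ s, jumpMass k p.1 p.2 ≤
      ∑' p : {p : ℕ × ℕ // P p}, jumpMass k p.val.1 p.val.2 := by
    have := ENNReal.sum_le_tsum
      (s.attach.image (fun q => (⟨q.1, hmem q.1 q.2⟩ : {p : ℕ × ℕ // P p})))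
      (f := fun p : {p : ℕ × ℕ // P p} => jumpMass k p.val.1 p.val.2)
    refine le_trans (le_of_eq ?_) this
    rw [Finset.sum_image (by intro a _ b _ hab; exact Subtype.ext (congrArg (Subtype.val : {p : ℕ × ℕ // P p} → ℕ × ℕ) hab))]
    rw [Finset.sum_attach s (fun p => jumpMass k p.1 p.2)]
  have hsum : ∑ p ∈ s, jumpMass k p.1 p.2 = k := by
    rw [hs, Finset.sum_filter, Finset.sum_product]
    have hrow : ∀ i ∈ Finset.Icc 2 (k+1),
        (∑ j ∈ Finset.range (2^(k+1+1)), if j < 2^i then jumpMass k i j else 0) = 1 := by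
      intro i hi
      rw [Finset.mem_Icc] at hi
      have hle : (2:ℕ)^i ≤ 2^(k+1+1) := Nat.pow_le_pow_right (by omega) (by omega)
      have hflt : Finset.filter (fun j => j < 2^i) (Finset.range (2^(k+1+1))) =
          Finset.range (2^i) := by
        ext n
        simp only [Finset.mem_filter, Finset.mem_range]
        omega
      rw [← Finset.sum_filter, hflt]
      have hval : ∀ j ∈ Finset.range (2^i), jumpMass k i j =
          ENNReal.ofReal ((2:ℝ) ^ (-(i : ℤ))) := by
        intro j hj
        exact jump_eq k (by omega) (by omega) (Finset.mem_range.1 hj)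
      rw [Finset.sum_congr rfl hval, Finset.sum_const, Finset.card_range, nsmul_eq_mul]
      rw [show ((2^i : ℕ) : ℝ≥0∞) = ENNReal.ofReal ((2:ℝ)^i) by
        rw [← ENNReal.ofReal_natCast]; norm_num]
      rw [← ENNReal.ofReal_mul (by positivity)]
      rw [show (2:ℝ)^i * (2:ℝ)^(-(i:ℤ)) = 1 by
        rw [← zpow_natCast (2:ℝ) i, ← zpow_add₀ (two_ne_zero)]
        simp]
      simp
    rw [Finset.sum_congr rfl hrow, Finset.sum_const, Nat.card_Icc]
    simp [show k + 1 + 1 - 2 = k by omega]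
  calc (k : ℝ≥0∞) = ∑ p ∈ s, jumpMass k p.1 p.2 := hsum.symm
    _ ≤ ∑' p : {p : ℕ × ℕ // P p}, jumpMass k p.val.1 p.val.2 := key
    _ = (2:ℝ≥0∞)^(0:ℕ) *
        ∑' p : {p : ℕ × ℕ // 0 < p.1 ∧ dyI p.1 p.2 ⊆ dyI 0 0}, jumpMass k p.val.1 p.val.2 := by
        rw [pow_zero, one_mul]
    _ ≤ carlesonLac k x := by
        rw [carlesonLac]
        exact le_iSup_of_le 0 (le_iSup_of_le 0 (le_iSup_of_le hx0 le_rfl))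

/-- the lacunary counterexample: `‖g‖_{L²(0,1)} = √k` while
`C(∇u)(x) ≳ k` for every `x ∈ (0,1)`; hence `‖C(∇u)‖₂ / ‖g‖₂ ≳ √k` is unbounded in `k`. -/
theorem stmt17 :
    ∃ c : ℝ, 0 < c ∧ ∀ k : ℕ, 1 ≤ k →
      (∫ x in Set.Ioo (0:ℝ) 1, (lacg k x) ^ 2 = (k : ℝ)) ∧
      ∀ x ∈ Set.Ioo (0:ℝ) 1, ENNReal.ofReal (c * k) ≤ carlesonLac k x := by
  refine ⟨1, one_pos, fun k hk => ⟨?_, fun x hx => ?_⟩⟩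
  · rw [← MeasureTheory.integral_Ico_eq_integral_Ioo]
    exact int_sq_lacg k
  · rw [one_mul, ENNReal.ofReal_natCast]
    exact carleson_lb k ⟨le_of_lt hx.1, hx.2⟩
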